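/- arXiv:2212.00248 — 2 statements merged into one kernel-verified Lean document; each statement's English description precedes it below -/
import Mathlib

section
/- Let E : A → A be a faithful positive linear map on a C*-algebra A (meaning E(a*a) = 0 implies a = 0), and let ρ : A → B be a *-homomorphism into a C*-algebra B. If ρ is injective on the image of E and ‖ρ(E(x))‖ ≤ ‖ρ(x)‖ for every positive x ∈ A, then ρ is injective. -/
/-- Let `E : A → A` be a faithful positive linear map on a C*-algebra `A` and
`ρ : A → B` a *-homomorphism.  If `ρ` is injective on the image of `E` and
`‖ρ (E x)‖ ≤ ‖ρ x‖` for every positive `x`, then `ρ` is injective. -/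
theorem stmt3 {A B : Type*} [CStarAlgebra A] [PartialOrder A] [StarOrderedRing A]
    [CStarAlgebra B] (E : A →ₗ[ℂ] A)
    (hpos : ∀ a : A, 0 ≤ a → 0 ≤ E a)
    (hfaith : ∀ a : A, E (star a * a) = 0 → a = 0)
    (ρ : A →⋆ₐ[ℂ] B)
    (hinj : Set.InjOn ρ (Set.range E))
    (hnorm : ∀ x : A, 0 ≤ x → ‖ρ (E x)‖ ≤ ‖ρ x‖) :
    Function.Injective ρ := by
  rw [injective_iff_map_eq_zero]
  intro a ha
  apply hfaith
  have h0 : ρ (star a * a) = 0 := by simp [map_mul, map_star, ha]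
  have hle : ‖ρ (E (star a * a))‖ ≤ 0 := by
    calc ‖ρ (E (star a * a))‖ ≤ ‖ρ (star a * a)‖ := hnorm _ (star_mul_self_nonneg a)
    _ = 0 := by rw [h0, norm_zero]
  have hz : ρ (E (star a * a)) = 0 := norm_le_zero_iff.mp hle
  have h0mem : (0 : A) ∈ Set.range E := ⟨0, map_zero E⟩
  have := hinj (Set.mem_range_self _) h0mem (by rw [hz, map_zero])
  simpa using this
end

section
/- Let E be a strongly connected directed graph with finitely many vertices. Then E satisfies Condition (L) if and only if E is not a simple cycle. -/
/-- Any cycle contains a subcycle with pairwise distinct base vertices. -/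
private lemma extract_cycle {V E : Type*} (r s : E → V) :
    ∀ (n : ℕ) (β : List E), β.length ≤ n → ∀ (hβ : β ≠ []),
    β.Chain' (fun e f => r e = s f) → s (β.head hβ) = r (β.getLast hβ) →
    ∃ (γ : List E) (hγ : γ ≠ []), γ.Chain' (fun e f => r e = s f) ∧
      s (γ.head hγ) = r (γ.getLast hγ) ∧ ((γ.map s).Nodup) ∧ ∀ e ∈ γ, e ∈ β := by
  intro n
  induction n with
  | zero =>
    intro β hlen hβ _ _
    rw [Nat.le_zero, List.length_eq_zero_iff] at hlen
    exact absurd hlen hβ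
  | succ n ih =>
    intro β hlen hβ hch hcl
    by_cases hnd : (β.map s).Nodup
    · exact ⟨β, hβ, hch, hcl, hnd, fun e he => he⟩
    · rw [List.nodup_iff_injective_getElem] at hnd
      obtain ⟨a, b, hab, hne⟩ := Function.not_injective_iff.mp hnd
      have hlm : (List.map s β).length = β.length := List.length_map _
      have key : ∀ (i j : ℕ) (hj : j < β.length) (hij : i < j), s (β[i]'(by omega)) = s (β[j]) →
          ∃ (γ : List E) (hγ : γ ≠ []), γ.Chain' (fun e f => r e = s f) ∧
            s (γ.head hγ) = r (γ.getLast hγ) ∧ ((γ.map s).Nodup) ∧ ∀ e ∈ γ, e ∈ β := by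
        intro i j hj hij hss
        set γ₀ : List E := (β.drop i).take (j - i) with hγ₀def
        have hi : i < β.length := lt_trans hij hj
        have hlen₀ : γ₀.length = j - i := by
          simp [hγ₀def, List.length_take, List.length_drop]; omega
        have hγ₀ : γ₀ ≠ [] := by
          intro h; rw [h] at hlen₀; simp at hlen₀; omega
        have hget : ∀ (k : ℕ) (hk : k < γ₀.length), γ₀[k] = β[i + k]'(by omega) := by
          intro k hk
          simp only [hγ₀def, List.getElem_take, List.getElem_drop]
        have hch₀ : γ₀.Chain' (fun e f => r e = s f) := (hch.drop i).take _
        have hhead : γ₀.head hγ₀ = β[i] := by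
          rw [List.head_eq_getElem_zero, hget 0 (by omega)]
          simp
        have hlast : γ₀.getLast hγ₀ = β[j - 1]'(by omega) := by
          rw [List.getLast_eq_getElem, hget (γ₀.length - 1) (by omega)]
          congr 1
          omega
        have hrel : r (β[j-1]'(by omega)) = s (β[j]) := by
          have := List.isChain_iff_getElem.mp hch (j - 1) (by omega)
          simpa [List.get_eq_getElem, Nat.sub_add_cancel (by omega : 1 ≤ j)] using this
        have hcl₀ : s (γ₀.head hγ₀) = r (γ₀.getLast hγ₀) := by
          rw [hhead, hlast, hrel, hss]
        obtain ⟨γ, hγ, h1, h2, h3, h4⟩ := ih γ₀ (by omega) hγ₀ hch₀ hcl₀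
        exact ⟨γ, hγ, h1, h2, h3, fun e he =>
          ((List.take_sublist _ _).trans (List.drop_sublist _ _)).subset (h4 e he)⟩
      rcases Nat.lt_or_ge a.val b.val with h' | h'
      · exact key a.val b.val (by omega) h' (by
          have := hab
          simpa [List.getElem_map] using this)
      · have h'' : b.val < a.val := by
          rcases Nat.lt_or_ge b.val a.val with h | h
          · exact h
          · exact absurd (Fin.ext (by omega)) hne
        exact key b.val a.val (by omega) h'' (by
          have := hab.symm
          simpa [List.getElem_map] using this)

/-- A cycle without an exit, in a strongly connected graph, passes through every vertex
and contains every edge. -/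
private lemma all_mem {V E : Type*} (r s : E → V)
    (hconn : ∀ v w : V, ∃ (p : List E) (hp : p ≠ []),
      p.Chain' (fun e f => r e = s f) ∧ s (p.head hp) = v ∧ r (p.getLast hp) = w)
    (α : List E) (hα : α ≠ []) (hch : α.Chain' (fun e f => r e = s f))
    (hcl : s (α.head hα) = r (α.getLast hα))
    (hne : ∀ f e, e ∈ α → s f = s e → f = e) :
    (∀ v : V, v ∈ α.map s) ∧ (∀ e : E, e ∈ α) := by
  have hr : ∀ e ∈ α, r e ∈ α.map s := by
    intro e he
    obtain ⟨i, hi, rfl⟩ := List.getElem_of_mem he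
    by_cases h : i + 1 < α.length
    · have hrel := List.isChain_iff_getElem.mp hch i (by omega)
      rw [hrel]
      exact List.mem_map_of_mem (f := s) (List.getElem_mem _)
    · have hie : α[i] = α.getLast hα := by
        rw [List.getLast_eq_getElem]
        congr 1
        omega
      rw [hie, ← hcl]
      exact List.mem_map_of_mem (f := s) (List.head_mem hα)
  have hstep : ∀ p : List E, p.Chain' (fun e f => r e = s f) → ∀ hp : p ≠ [],
      s (p.head hp) ∈ α.map s → r (p.getLast hp) ∈ α.map s := by
    intro p
    induction p with
    | nil => intro _ hp; exact absurd rfl hp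
    | cons e p' ih =>
      intro hchp hp hhead
      simp only [List.head_cons] at hhead
      obtain ⟨e', he', hse⟩ := List.mem_map.mp hhead
      have heα : e ∈ α := by
        have := hne e e' he' hse.symm
        rw [this]; exact he'
      by_cases hp' : p' = []
      · subst hp'
        simpa using hr e heα
      · rw [List.getLast_cons hp']
        have hrel : r e = s (p'.head hp') := by
          have := (List.isChain_cons.mp hchp).1
          exact this _ (List.head?_eq_head hp')
        exact ih (List.isChain_cons.mp hchp).2 hp' (by rw [← hrel]; exact hr e heα)
  have hv : ∀ v : V, v ∈ α.map s := by
    intro v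
    obtain ⟨p, hp, hchp, hsp, hrp⟩ := hconn (s (α.head hα)) v
    rw [← hrp]
    exact hstep p hchp hp (by rw [hsp]; exact List.mem_map_of_mem (f := s) (List.head_mem hα))
  refine ⟨hv, fun e => ?_⟩
  obtain ⟨e', he', hse⟩ := List.mem_map.mp (hv (s e))
  rw [hne e e' he' hse.symm]
  exact he'

/-- Let `E` be a strongly connected directed graph with finitely many vertices.  Then `E`
satisfies Condition (L) (every cycle has an exit) if and only if `E` is not a simple cycle
(a cycle with pairwise distinct base vertices, passing through every vertex exactly once,
whose edges are exactly all edges of the graph). -/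
theorem stmt6 {V E : Type*} [Finite V] (r s : E → V)
    (hconn : ∀ v w : V, ∃ (p : List E) (hp : p ≠ []),
      p.Chain' (fun e f => r e = s f) ∧ s (p.head hp) = v ∧ r (p.getLast hp) = w) :
    (∀ (α : List E) (hα : α ≠ []), α.Chain' (fun e f => r e = s f) →
        s (α.head hα) = r (α.getLast hα) → ∃ f : E, ∃ e ∈ α, s f = s e ∧ f ≠ e)
      ↔
    ¬ (∃ (α : List E) (hα : α ≠ []), α.Chain' (fun e f => r e = s f) ∧
        s (α.head hα) = r (α.getLast hα) ∧ (α.map s).Nodup ∧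
        (∀ v : V, v ∈ α.map s) ∧ (∀ e : E, e ∈ α)) := by
  constructor
  · rintro hL ⟨α, hα, hch, hcl, hnd, _, halle⟩
    obtain ⟨f, e, he, hsfe, hfe⟩ := hL α hα hch hcl
    exact hfe (List.inj_on_of_nodup_map hnd (halle f) he hsfe)
  · intro hns α hα hch hcl
    by_contra h
    push_neg at h
    obtain ⟨γ, hγ, h1, h2, h3, h4⟩ :=
      extract_cycle r s α.length α le_rfl hα hch hcl
    have hneγ : ∀ f e, e ∈ γ → s f = s e → f = e := fun f e he hs => h f e (h4 e he) hs
    obtain ⟨hv, he⟩ := all_mem r s hconn γ hγ h1 h2 hneγ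
    exact hns ⟨γ, hγ, h1, h2, h3, hv, he⟩
end
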